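/- arXiv:1003.2804 — 2 statements merged into one kernel-verified Lean document; each statement's English description precedes it below -/
import Mathlib

section
/- Let q and q* be the forward and backward quantities for a fixed response sequence y. Then for every t with 1 ≤ t ≤ T−1 and all latent states u, v ∈ Fin k, q(t−1, u) · π^{(t)}(u, v) · φ^{(t)}(y t, v) · q*(t, v) equals the sum of w(ū) over all full latent paths ū : Fin T → Fin k with ū(t−1) = u and ū(t) = v. Consequently Σ_{u,v ∈ Fin k} q(t−1, u) · π^{(t)}(u, v) · φ^{(t)}(y t, v) · q*(t, v) = f(y), so when f(y) > 0 the posterior pairwise quantities r^{(t)}(u,v) = q(t−1,u) π^{(t)}(u,v) φ^{(t)}(y t, v) q*(t,v) / f(y) sum to 1 over (u, v). -/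
/-!
Latent Markov model with `k ≥ 1` latent states, `l ≥ 1` response categories and
`T + 1 ≥ 1` time occasions (occasions are indexed by `0, …, T`, so that the last
occasion, written `T − 1` in the paper for `T` occasions, is here `T`).
-/

/-- Extension of a partial latent path `ub : {0,…,t} → Fin k` to all of `ℕ`;
for `s ≤ t` it returns `ub s`. -/
def extPath {k t : ℕ} (u : Fin (t + 1) → Fin k) (s : ℕ) : Fin k :=
  u ⟨min s t, Nat.lt_succ_of_le (min_le_right s t)⟩

/-- The partial weight of a latent path up to occasion `t`.
For `t = T` (the last occasion) this is the full weight `w(ub)`. -/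
noncomputable def pweight {k l : ℕ} (π : Fin k → ℝ) (P : ℕ → Fin k → Fin k → ℝ)
    (Φ : ℕ → Fin l → Fin k → ℝ) (y : ℕ → Fin l) (t : ℕ) (u : ℕ → Fin k) : ℝ :=
  π (u 0) * (∏ s ∈ Finset.Icc 1 t, P s (u (s - 1)) (u s)) *
    ∏ s ∈ Finset.range (t + 1), Φ s (y s) (u s)

lemma extPath_apply {k t : ℕ} (u : Fin (t + 1) → Fin k) (s : ℕ) (h : s ≤ t) :
    extPath u s = u ⟨s, Nat.lt_succ_of_le h⟩ := by
  simp [extPath, min_eq_left h]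

lemma extPath_snoc_lt {k t : ℕ} (c : Fin (t + 1) → Fin k) (v : Fin k) (s : ℕ) (h : s ≤ t) :
    extPath (Fin.snoc c v) s = extPath c s := by
  rw [extPath_apply _ s (by omega), extPath_apply _ s h]
  have : (⟨s, by omega⟩ : Fin (t + 2)) = Fin.castSucc ⟨s, Nat.lt_succ_of_le h⟩ := rfl
  rw [this, Fin.snoc_castSucc]

lemma extPath_snoc_top {k t : ℕ} (c : Fin (t + 1) → Fin k) (v : Fin k) :
    extPath (Fin.snoc c v) (t + 1) = v := by
  rw [extPath_apply _ (t+1) le_rfl]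
  have : (⟨t + 1, by omega⟩ : Fin (t + 2)) = Fin.last (t + 1) := rfl
  rw [this, Fin.snoc_last]

lemma extPath_last {k t : ℕ} (c : Fin (t + 1) → Fin k) :
    extPath c t = c (Fin.last t) := by
  rw [extPath_apply _ t le_rfl]; rfl

lemma pweight_snoc {k l : ℕ} (π : Fin k → ℝ) (P : ℕ → Fin k → Fin k → ℝ)
    (Φ : ℕ → Fin l → Fin k → ℝ) (y : ℕ → Fin l) {t : ℕ}
    (c : Fin (t + 1) → Fin k) (v : Fin k) :
    pweight π P Φ y (t + 1) (extPath (Fin.snoc c v)) =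
      pweight π P Φ y t (extPath c) *
        (P (t + 1) (c (Fin.last t)) v * Φ (t + 1) (y (t + 1)) v) := by
  unfold pweight
  rw [Finset.prod_Icc_succ_top (by omega), Finset.prod_range_succ]
  rw [extPath_snoc_lt c v 0 (by omega), extPath_snoc_top]
  simp only [Nat.add_sub_cancel]
  rw [extPath_snoc_lt c v t le_rfl, extPath_last]
  have h1 : ∏ s ∈ Finset.Icc 1 t, P s (extPath (Fin.snoc c v) (s-1)) (extPath (Fin.snoc c v) s)
      = ∏ s ∈ Finset.Icc 1 t, P s (extPath c (s-1)) (extPath c s) := by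
    refine Finset.prod_congr rfl fun s hs => ?_
    rw [Finset.mem_Icc] at hs
    rw [extPath_snoc_lt c v (s-1) (by omega), extPath_snoc_lt c v s (by omega)]
  have h2 : ∏ s ∈ Finset.range (t+1), Φ s (y s) (extPath (Fin.snoc c v) s)
      = ∏ s ∈ Finset.range (t+1), Φ s (y s) (extPath c s) := by
    refine Finset.prod_congr rfl fun s hs => ?_
    rw [Finset.mem_range] at hs
    rw [extPath_snoc_lt c v s (by omega)]
  rw [h1, h2]
  ring

lemma fwd {k l T : ℕ} (π : Fin k → ℝ) (P : ℕ → Fin k → Fin k → ℝ)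
    (Φ : ℕ → Fin l → Fin k → ℝ) (y : ℕ → Fin l) (q : ℕ → Fin k → ℝ)
    (hq0 : ∀ u, q 0 u = π u * Φ 0 (y 0) u)
    (hqrec : ∀ t, 1 ≤ t → t ≤ T → ∀ v,
      q t v = (∑ u, q (t - 1) u * P t u v) * Φ t (y t) v) :
    ∀ t, t ≤ T → ∀ u, q t u =
      ∑ c ∈ Finset.univ.filter (fun c : Fin (t + 1) → Fin k => extPath c t = u),
        pweight π P Φ y t (extPath c) := by
  intro t
  induction t with
  | zero =>
    intro _ u
    have hset : Finset.univ.filter (fun c : Fin 1 → Fin k => extPath c 0 = u)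
        = {fun _ => u} := by
      ext c
      simp only [Finset.mem_filter, Finset.mem_univ, true_and, Finset.mem_singleton]
      constructor
      · intro h
        funext i
        have : i = (0 : Fin 1) := Subsingleton.elim _ _
        subst this
        rw [← h, extPath_apply _ 0 le_rfl]
        exact congrArg c (Fin.ext (by simp))
      · intro h; subst h; rw [extPath_apply _ 0 le_rfl]
    rw [hset, Finset.sum_singleton, hq0]
    simp [pweight, extPath]
  | succ t ih =>
    intro hT u
    have hrec := hqrec (t + 1) (by omega) hT u
    simp only [Nat.add_sub_cancel] at hrec
    rw [hrec, Finset.sum_congr rfl (fun w _ => by rw [ih (by omega) w])]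
    rw [Finset.sum_mul]
    have key : ∀ w : Fin k,
        (∑ c ∈ Finset.univ.filter (fun c : Fin (t + 1) → Fin k => extPath c t = w),
          pweight π P Φ y t (extPath c)) * P (t + 1) w u * Φ (t + 1) (y (t + 1)) u
        = ∑ c ∈ Finset.univ.filter (fun c : Fin (t + 1) → Fin k => extPath c t = w),
          pweight π P Φ y (t + 1) (extPath (Fin.snoc c u)) := by
      intro w
      rw [Finset.sum_mul, Finset.sum_mul]
      refine Finset.sum_congr rfl fun c hc => ?_
      rw [Finset.mem_filter] at hc
      have h2 : c (Fin.last t) = w := (extPath_last c).symm.trans hc.2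
      rw [pweight_snoc, h2]
      ring
    rw [Finset.sum_congr rfl (fun w _ => by rw [mul_assoc, ← mul_assoc, key w])]
    rw [Finset.sum_fiberwise Finset.univ (fun c : Fin (t+1) → Fin k => extPath c t)
      (fun c => pweight π P Φ y (t + 1) (extPath (Fin.snoc c u)))]
    refine Finset.sum_nbij' (fun c => Fin.snoc c u) (fun c => c ∘ Fin.castSucc)
      ?_ ?_ ?_ ?_ ?_
    · intro c _
      simp only [Finset.mem_filter, Finset.mem_univ, true_and]
      exact extPath_snoc_top c u
    · intro c _; exact Finset.mem_univ _
    · intro c _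
      simp
    · intro c hc
      rw [Finset.mem_filter] at hc
      have h2 : c (Fin.last (t + 1)) = u := (extPath_last c).symm.trans hc.2
      funext i
      refine Fin.lastCases ?_ (fun j => ?_) i
      · simp [h2]
      · simp
    · intro c _; rfl

lemma bwd {k l T : ℕ} (π : Fin k → ℝ) (P : ℕ → Fin k → Fin k → ℝ)
    (Φ : ℕ → Fin l → Fin k → ℝ) (y : ℕ → Fin l) (qs : ℕ → Fin k → ℝ)
    (hqsT : ∀ u, qs T u = 1)
    (hqsrec : ∀ t < T, ∀ u,
      qs t u = ∑ v, P (t + 1) u v * Φ (t + 1) (y (t + 1)) v * qs (t + 1) v) :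
    ∀ m t (ht : t ≤ T), t + m = T → ∀ a : Fin (t + 1) → Fin k,
      pweight π P Φ y t (extPath a) * qs t (a (Fin.last t)) =
        ∑ c ∈ Finset.univ.filter (fun c : Fin (T + 1) → Fin k =>
            ∀ s : Fin (t + 1), c (Fin.castLE (Nat.succ_le_succ ht) s) = a s),
          pweight π P Φ y T (extPath c) := by
  intro m
  induction m with
  | zero =>
    intro t ht hm a
    have ht' : t = T := by omega
    subst ht'
    have hset : (Finset.univ.filter (fun c : Fin (t + 1) → Fin k =>
        ∀ s : Fin (t + 1), c (Fin.castLE (Nat.succ_le_succ ht) s) = a s)) = {a} := by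
      ext c
      simp only [Finset.mem_filter, Finset.mem_univ, true_and, Finset.mem_singleton]
      constructor
      · intro h
        funext s
        have := h s
        rwa [show Fin.castLE (Nat.succ_le_succ ht) s = s from Fin.ext rfl] at this
      · intro h s
        subst h
        rw [show Fin.castLE (Nat.succ_le_succ ht) s = s from Fin.ext rfl]
    rw [hset, Finset.sum_singleton, hqsT, mul_one]
  | succ m ih =>
    intro t ht hm a
    have htT : t < T := by omega
    rw [hqsrec t htT, Finset.mul_sum]
    have step : ∀ w : Fin k,
        pweight π P Φ y t (extPath a) *
          (P (t + 1) (a (Fin.last t)) w * Φ (t + 1) (y (t + 1)) w * qs (t + 1) w)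
        = ∑ c ∈ Finset.univ.filter (fun c : Fin (T + 1) → Fin k =>
            ∀ s : Fin (t + 1 + 1), c (Fin.castLE (Nat.succ_le_succ htT) s) = Fin.snoc (α := fun _ => Fin k) a w s),
          pweight π P Φ y T (extPath c) := by
      intro w
      have := ih (t + 1) htT (by omega) (Fin.snoc a w)
      rw [pweight_snoc, Fin.snoc_last] at this
      rw [← this]
      ring
    rw [Finset.sum_congr rfl (fun w _ => step w)]
    have hfib := Finset.sum_fiberwise
      (Finset.univ.filter (fun c : Fin (T + 1) → Fin k =>
        ∀ s : Fin (t + 1), c (Fin.castLE (Nat.succ_le_succ ht) s) = a s))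
      (fun c => c ⟨t + 1, by omega⟩)
      (fun c => pweight π P Φ y T (extPath c))
    rw [← hfib]
    refine Finset.sum_congr rfl fun w _ => ?_
    congr 1
    rw [Finset.filter_filter]
    refine Finset.filter_congr fun c _ => ?_
    constructor
    · intro h
      constructor
      · intro s
        have := h s.castSucc
        rwa [Fin.snoc_castSucc, show Fin.castLE (Nat.succ_le_succ htT) s.castSucc
          = Fin.castLE (Nat.succ_le_succ ht) s from Fin.ext rfl] at this
      · have := h (Fin.last (t + 1))
        rwa [Fin.snoc_last, show Fin.castLE (Nat.succ_le_succ htT) (Fin.last (t + 1))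
          = ⟨t + 1, by omega⟩ from Fin.ext rfl] at this
    · intro ⟨h1, h2⟩ s
      refine Fin.lastCases ?_ (fun j => ?_) s
      · rw [show Fin.castLE (Nat.succ_le_succ htT) (Fin.last (t + 1))
          = ⟨t + 1, by omega⟩ from Fin.ext rfl, Fin.snoc_last]
        exact h2
      · rw [Fin.snoc_castSucc, show Fin.castLE (Nat.succ_le_succ htT) j.castSucc
          = Fin.castLE (Nat.succ_le_succ ht) j from Fin.ext rfl]
        exact h1 j

/-- For `1 ≤ t ≤ T` and latent states `u, v`:
`q(t−1,u)·π⁽ᵗ⁾(u,v)·φ⁽ᵗ⁾(y t,v)·q*(t,v)` equals the sum of `w(ub)` over all full latent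
paths with `ub (t−1) = u` and `ub t = v`; consequently the double sum over `(u,v)`
equals `f(y)`, and when `f(y) > 0` the posterior pairwise quantities
`r⁽ᵗ⁾(u,v)` sum to 1 over `(u, v)`. -/
theorem forward_backward_pairwise
    (k l T : ℕ) (hk : 1 ≤ k) (hl : 1 ≤ l)
    (π : Fin k → ℝ) (P : ℕ → Fin k → Fin k → ℝ) (Φ : ℕ → Fin l → Fin k → ℝ)
    (y : ℕ → Fin l) (q qs : ℕ → Fin k → ℝ)
    (hq0 : ∀ u, q 0 u = π u * Φ 0 (y 0) u)
    (hqrec : ∀ t, 1 ≤ t → t ≤ T → ∀ v,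
      q t v = (∑ u, q (t - 1) u * P t u v) * Φ t (y t) v)
    (hqsT : ∀ u, qs T u = 1)
    (hqsrec : ∀ t < T, ∀ u,
      qs t u = ∑ v, P (t + 1) u v * Φ (t + 1) (y (t + 1)) v * qs (t + 1) v) :
    ∀ t, 1 ≤ t → t ≤ T →
      (∀ u v : Fin k,
        q (t - 1) u * P t u v * Φ t (y t) v * qs t v =
          ∑ ub ∈ Finset.univ.filter
              (fun ub : Fin (T + 1) → Fin k => extPath ub (t - 1) = u ∧ extPath ub t = v),
            pweight π P Φ y T (extPath ub)) ∧
      (∑ u : Fin k, ∑ v : Fin k, q (t - 1) u * P t u v * Φ t (y t) v * qs t v =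
        ∑ ub : Fin (T + 1) → Fin k, pweight π P Φ y T (extPath ub)) ∧
      (0 < (∑ ub : Fin (T + 1) → Fin k, pweight π P Φ y T (extPath ub)) →
        ∑ u : Fin k, ∑ v : Fin k,
          q (t - 1) u * P t u v * Φ t (y t) v * qs t v /
            (∑ ub : Fin (T + 1) → Fin k, pweight π P Φ y T (extPath ub)) = 1) := by
  intro t ht1 htT
  obtain ⟨s, rfl⟩ : ∃ s, t = s + 1 := ⟨t - 1, by omega⟩
  simp only [Nat.add_sub_cancel]
  have hsT : s + 1 ≤ T := htT
  have part1 : ∀ u v : Fin k,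
      q s u * P (s + 1) u v * Φ (s + 1) (y (s + 1)) v * qs (s + 1) v =
        ∑ ub ∈ Finset.univ.filter
            (fun ub : Fin (T + 1) → Fin k => extPath ub s = u ∧ extPath ub (s + 1) = v),
          pweight π P Φ y T (extPath ub) := by
    intro u v
    -- fiberwise over heads
    have hfib := Finset.sum_fiberwise
      (Finset.univ.filter (fun c : Fin (T + 1) → Fin k =>
        extPath c s = u ∧ extPath c (s + 1) = v))
      (fun c => fun i : Fin (s + 1 + 1) => c (Fin.castLE (Nat.succ_le_succ hsT) i))
      (fun c => pweight π P Φ y T (extPath c))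
    rw [← hfib]
    have inner : ∀ a : Fin (s + 1 + 1) → Fin k,
        (∑ c ∈ (Finset.univ.filter (fun c : Fin (T + 1) → Fin k =>
            extPath c s = u ∧ extPath c (s + 1) = v)).filter
            (fun c => (fun i : Fin (s + 1 + 1) => c (Fin.castLE (Nat.succ_le_succ hsT) i)) = a),
          pweight π P Φ y T (extPath c))
        = if extPath a s = u ∧ extPath a (s + 1) = v then
            pweight π P Φ y (s + 1) (extPath a) * qs (s + 1) (a (Fin.last (s + 1))) else 0 := by
      intro a
      have htrans : ∀ c : Fin (T + 1) → Fin k,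
          ((fun i : Fin (s + 1 + 1) => c (Fin.castLE (Nat.succ_le_succ hsT) i)) = a) →
          ((extPath c s = u ∧ extPath c (s + 1) = v) ↔
            (extPath a s = u ∧ extPath a (s + 1) = v)) := by
        intro c hc
        have e1 : extPath c s = extPath a s := by
          rw [extPath_apply _ s (by omega), extPath_apply _ s (by omega), ← hc]
          exact congrArg c (Fin.ext rfl)
        have e2 : extPath c (s + 1) = extPath a (s + 1) := by
          rw [extPath_apply _ (s + 1) (by omega), extPath_apply _ (s + 1) (by omega), ← hc]
          exact congrArg c (Fin.ext rfl)
        rw [e1, e2]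
      split_ifs with hD
      · rw [Finset.filter_filter]
        have hflt : Finset.univ.filter (fun c : Fin (T + 1) → Fin k =>
            (extPath c s = u ∧ extPath c (s + 1) = v) ∧
              (fun i : Fin (s + 1 + 1) => c (Fin.castLE (Nat.succ_le_succ hsT) i)) = a)
            = Finset.univ.filter (fun c : Fin (T + 1) → Fin k =>
              ∀ i : Fin (s + 1 + 1), c (Fin.castLE (Nat.succ_le_succ hsT) i) = a i) := by
          refine Finset.filter_congr fun c _ => ?_
          constructor
          · intro ⟨_, h2⟩ i
            rw [← h2]
          · intro h
            have ha : (fun i : Fin (s + 1 + 1) => c (Fin.castLE (Nat.succ_le_succ hsT) i)) = a :=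
              funext h
            exact ⟨(htrans c ha).2 hD, ha⟩
        rw [hflt, ← bwd π P Φ y qs hqsT hqsrec (T - (s + 1)) (s + 1) hsT (by omega) a]
      · rw [Finset.filter_filter]
        rw [Finset.filter_false_of_mem, Finset.sum_empty]
        intro c _ hcontra
        exact hD ((htrans c hcontra.2).1 hcontra.1)
    rw [Finset.sum_congr rfl (fun a _ => inner a), Finset.sum_ite, Finset.sum_const_zero,
      add_zero]
    have hlastv : ∀ a ∈ Finset.univ.filter (fun a : Fin (s + 1 + 1) → Fin k =>
        extPath a s = u ∧ extPath a (s + 1) = v), a (Fin.last (s + 1)) = v := by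
      intro a ha
      rw [Finset.mem_filter] at ha
      exact (extPath_last a).symm.trans ha.2.2
    rw [Finset.sum_congr rfl (fun a ha => by
      rw [hlastv a (by simpa using ha)])]
    rw [← Finset.sum_mul]
    -- head sum
    have hhead : ∑ a ∈ Finset.univ.filter (fun a : Fin (s + 1 + 1) → Fin k =>
          extPath a s = u ∧ extPath a (s + 1) = v),
        pweight π P Φ y (s + 1) (extPath a)
        = q s u * (P (s + 1) u v * Φ (s + 1) (y (s + 1)) v) := by
      have hbij : ∑ a ∈ Finset.univ.filter (fun a : Fin (s + 1 + 1) → Fin k =>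
            extPath a s = u ∧ extPath a (s + 1) = v),
          pweight π P Φ y (s + 1) (extPath a)
          = ∑ a' ∈ Finset.univ.filter (fun a' : Fin (s + 1) → Fin k => extPath a' s = u),
            pweight π P Φ y (s + 1) (extPath (Fin.snoc a' v)) := by
        refine Finset.sum_nbij' (fun a => a ∘ Fin.castSucc) (fun a' => Fin.snoc a' v)
          ?_ ?_ ?_ ?_ ?_
        · intro a ha
          rw [Finset.mem_filter] at ha ⊢
          refine ⟨Finset.mem_univ _, ?_⟩
          rw [extPath_apply _ s le_rfl]
          rw [← ha.2.1, extPath_apply _ s (by omega)]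
          exact (congrArg a (Fin.ext rfl)).symm
        · intro a' ha'
          rw [Finset.mem_filter] at ha' ⊢
          exact ⟨Finset.mem_univ _, by rw [extPath_snoc_lt _ _ s le_rfl]; exact ha'.2,
            extPath_snoc_top _ _⟩
        · intro a ha
          rw [Finset.mem_filter] at ha
          have hlast : a (Fin.last (s + 1)) = v := (extPath_last a).symm.trans ha.2.2
          funext i
          refine Fin.lastCases ?_ (fun j => ?_) i
          · simp [hlast]
          · simp
        · intro a' _
          simp
        · intro a ha
          rw [Finset.mem_filter] at ha
          have hlast : a (Fin.last (s + 1)) = v := (extPath_last a).symm.trans ha.2.2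
          have hid : Fin.snoc (a ∘ Fin.castSucc) v = a := by
            funext i
            refine Fin.lastCases ?_ (fun j => ?_) i
            · simp [hlast]
            · simp
          rw [hid]
      rw [hbij]
      have hrw : ∑ a' ∈ Finset.univ.filter (fun a' : Fin (s + 1) → Fin k => extPath a' s = u),
            pweight π P Φ y (s + 1) (extPath (Fin.snoc a' v))
          = ∑ a' ∈ Finset.univ.filter (fun a' : Fin (s + 1) → Fin k => extPath a' s = u),
            pweight π P Φ y s (extPath a') * (P (s + 1) u v * Φ (s + 1) (y (s + 1)) v) := by
        refine Finset.sum_congr rfl fun a' ha' => ?_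
        rw [Finset.mem_filter] at ha'
        have hlast : a' (Fin.last s) = u := (extPath_last a').symm.trans ha'.2
        rw [pweight_snoc, hlast]
      rw [hrw, ← Finset.sum_mul, ← fwd π P Φ y q hq0 hqrec s (by omega) u]
    rw [hhead]
    ring
  refine ⟨part1, ?_, ?_⟩
  · rw [Finset.sum_congr rfl (fun u _ => Finset.sum_congr rfl (fun v _ => part1 u v))]
    have hfib2 := Finset.sum_fiberwise (Finset.univ : Finset (Fin (T + 1) → Fin k))
      (fun c => (extPath c s, extPath c (s + 1)))
      (fun c => pweight π P Φ y T (extPath c))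
    rw [← hfib2, Fintype.sum_prod_type]
    refine Finset.sum_congr rfl fun u _ => Finset.sum_congr rfl fun v _ => ?_
    congr 1
    refine Finset.filter_congr fun c _ => ?_
    simp [Prod.ext_iff]
  · intro hpos
    have part2 : ∑ u : Fin k, ∑ v : Fin k,
        q s u * P (s + 1) u v * Φ (s + 1) (y (s + 1)) v * qs (s + 1) v =
        ∑ ub : Fin (T + 1) → Fin k, pweight π P Φ y T (extPath ub) := by
      rw [Finset.sum_congr rfl (fun u _ => Finset.sum_congr rfl (fun v _ => part1 u v))]
      have hfib2 := Finset.sum_fiberwise (Finset.univ : Finset (Fin (T + 1) → Fin k))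
        (fun c => (extPath c s, extPath c (s + 1)))
        (fun c => pweight π P Φ y T (extPath c))
      rw [← hfib2, Fintype.sum_prod_type]
      refine Finset.sum_congr rfl fun u _ => Finset.sum_congr rfl fun v _ => ?_
      congr 1
      refine Finset.filter_congr fun c _ => ?_
      simp [Prod.ext_iff]
    simp only [div_eq_mul_inv, ← Finset.sum_mul]
    rw [part2, mul_inv_cancel₀ (ne_of_gt hpos)]
end

section
/- Suppose all entries of π, of each π^{(t)}, and of each φ^{(t)} are nonnegative. Define the Viterbi quantities r̃(0, u) = π(u) · φ^{(0)}(y 0, u) and, for 1 ≤ t ≤ T−1, r̃(t, v) = φ^{(t)}(y t, v) · max_{u ∈ Fin k} (r̃(t−1, u) · π^{(t)}(u, v)). Then for every t and v, r̃(t, v) equals the maximum, over all partial latent paths ū : {0,…,t} → Fin k with ū(t) = v, of the partial weight π(ū 0) · ∏_{s=1}^{t} π^{(s)}(ū(s−1), ū s) · ∏_{s=0}^{t} φ^{(s)}(y s, ū s); in particular max_{v} r̃(T−1, v) = max_{ū : Fin T → Fin k} w(ū). -/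
lemma pweight_congr {k l : ℕ} (π : Fin k → ℝ) (P : ℕ → Fin k → Fin k → ℝ)
    (Φ : ℕ → Fin l → Fin k → ℝ) (y : ℕ → Fin l) (t : ℕ) {u u' : ℕ → Fin k}
    (h : ∀ s ≤ t, u s = u' s) :
    pweight π P Φ y t u = pweight π P Φ y t u' := by
  unfold pweight
  rw [h 0 (Nat.zero_le _)]
  congr 1
  · congr 1
    refine Finset.prod_congr rfl fun s hs => ?_
    simp only [Finset.mem_Icc] at hs
    rw [h (s-1) (le_trans (Nat.sub_le s 1) hs.2), h s hs.2]
  · refine Finset.prod_congr rfl fun s hs => ?_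
    simp only [Finset.mem_range, Nat.lt_succ_iff] at hs
    rw [h s hs]

lemma pweight_succ {k l : ℕ} (π : Fin k → ℝ) (P : ℕ → Fin k → Fin k → ℝ)
    (Φ : ℕ → Fin l → Fin k → ℝ) (y : ℕ → Fin l) (t : ℕ) (u : ℕ → Fin k) :
    pweight π P Φ y (t+1) u =
      Φ (t+1) (y (t+1)) (u (t+1)) * (pweight π P Φ y t u * P (t+1) (u t) (u (t+1))) := by
  unfold pweight
  rw [Finset.prod_Icc_succ_top (Nat.le_add_left 1 t), Finset.prod_range_succ]
  simp only [Nat.add_sub_cancel]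
  ring

theorem viterbi_forward_eq_max_partial_paths
    (k l T : ℕ) (hk : 1 ≤ k) (hl : 1 ≤ l)
    (π : Fin k → ℝ) (P : ℕ → Fin k → Fin k → ℝ) (Φ : ℕ → Fin l → Fin k → ℝ)
    (hπ : ∀ u, 0 ≤ π u)
    (hP : ∀ t, 1 ≤ t → t ≤ T → ∀ u v, 0 ≤ P t u v)
    (hΦ : ∀ t ≤ T, ∀ yv u, 0 ≤ Φ t yv u)
    (y : ℕ → Fin l) (r : ℕ → Fin k → ℝ)
    (hr0 : ∀ u, r 0 u = π u * Φ 0 (y 0) u)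
    (hrrec : ∀ t, 1 ≤ t → t ≤ T → ∀ v,
      r t v = Φ t (y t) v *
        Finset.univ.sup' ⟨⟨0, hk⟩, Finset.mem_univ _⟩ (fun u => r (t - 1) u * P t u v)) :
    (∀ t ≤ T, ∀ v : Fin k,
      r t v = (Finset.univ.filter
          (fun ub : Fin (t + 1) → Fin k => ub (Fin.last t) = v)).sup'
        ⟨fun _ => v, Finset.mem_filter.mpr ⟨Finset.mem_univ _, rfl⟩⟩
        (fun ub => pweight π P Φ y t (extPath ub))) ∧
    Finset.univ.sup' ⟨⟨0, hk⟩, Finset.mem_univ _⟩ (fun v => r T v) =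
      Finset.univ.sup' ⟨fun _ => ⟨0, hk⟩, Finset.mem_univ _⟩
        (fun ub : Fin (T + 1) → Fin k => pweight π P Φ y T (extPath ub)) := by
  have main : ∀ t ≤ T, ∀ v : Fin k,
      r t v = (Finset.univ.filter
          (fun ub : Fin (t + 1) → Fin k => ub (Fin.last t) = v)).sup'
        ⟨fun _ => v, Finset.mem_filter.mpr ⟨Finset.mem_univ _, rfl⟩⟩
        (fun ub => pweight π P Φ y t (extPath ub)) := by
    intro t
    induction t with
    | zero =>
      intro _ v
      rw [hr0]
      have hval : ∀ ub ∈ Finset.univ.filter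
          (fun ub : Fin 1 → Fin k => ub (Fin.last 0) = v),
          pweight π P Φ y 0 (extPath ub) = π v * Φ 0 (y 0) v := by
        intro ub hub
        have h0 : ub (Fin.last 0) = v := (Finset.mem_filter.mp hub).2
        have he : extPath ub 0 = v := by
          rw [← h0]; rfl
        simp [pweight, he]
      exact ((Finset.sup'_congr _ rfl hval).trans (Finset.sup'_const _ _)).symm
    | succ t ih =>
      intro hT v
      have htT : t ≤ T := le_trans (Nat.le_succ t) hT
      have hrec := hrrec (t+1) (Nat.le_add_left 1 t) hT v
      simp only [Nat.add_sub_cancel] at hrec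
      rw [hrec]
      apply le_antisymm
      · obtain ⟨u0, hu0mem, hu0⟩ :=
          Finset.exists_mem_eq_sup' (⟨⟨0, hk⟩, Finset.mem_univ _⟩ : Finset.univ.Nonempty)
            (fun u => r t u * P (t+1) u v)
        rw [hu0, ih htT u0]
        obtain ⟨ub0, hub0mem, hub0⟩ :=
          Finset.exists_mem_eq_sup'
            (⟨fun _ => u0, Finset.mem_filter.mpr ⟨Finset.mem_univ _, rfl⟩⟩ :
              (Finset.univ.filter
                (fun ub : Fin (t + 1) → Fin k => ub (Fin.last t) = u0)).Nonempty)
            (fun ub => pweight π P Φ y t (extPath ub))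
        rw [hub0]
        have hub0last : ub0 (Fin.last t) = u0 := (Finset.mem_filter.mp hub0mem).2
        have hmem : (Fin.snoc ub0 v : Fin (t+2) → Fin k) ∈ Finset.univ.filter
            (fun ub : Fin (t + 2) → Fin k => ub (Fin.last (t+1)) = v) :=
          by simp
        refine le_trans (le_of_eq ?_) (Finset.le_sup' _ hmem)
        rw [pweight_succ]
        have h1 : extPath (Fin.snoc ub0 v : Fin (t+2) → Fin k) (t+1) = v := by
          show (Fin.snoc ub0 v : Fin (t+2) → Fin k) ⟨min (t+1) (t+1), _⟩ = v
          have : (⟨min (t+1) (t+1), Nat.lt_succ_of_le (min_le_right _ _)⟩ : Fin (t+2)) =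
              Fin.last (t+1) := by ext; simp
          rw [this, Fin.snoc_last]
        have h2 : extPath (Fin.snoc ub0 v : Fin (t+2) → Fin k) t = u0 := by
          show (Fin.snoc ub0 v : Fin (t+2) → Fin k) ⟨min t (t+1), _⟩ = u0
          have : (⟨min t (t+1), Nat.lt_succ_of_le (min_le_right _ _)⟩ : Fin (t+2)) =
              Fin.castSucc (Fin.last t) := by ext; simp [Nat.min_eq_left (Nat.le_succ t)]
          rw [this, Fin.snoc_castSucc, hub0last]
        have h3 : pweight π P Φ y t (extPath (Fin.snoc ub0 v : Fin (t+2) → Fin k)) =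
            pweight π P Φ y t (extPath ub0) := by
          refine pweight_congr π P Φ y t fun s hs => ?_
          show (Fin.snoc ub0 v : Fin (t+2) → Fin k) ⟨min s (t+1), _⟩ = ub0 ⟨min s t, _⟩
          have hst : min s (t+1) = s := Nat.min_eq_left (le_trans hs (Nat.le_succ t))
          have hst' : min s t = s := Nat.min_eq_left hs
          have : (⟨min s (t+1), Nat.lt_succ_of_le (min_le_right _ _)⟩ : Fin (t+2)) =
              Fin.castSucc ⟨min s t, Nat.lt_succ_of_le (min_le_right _ _)⟩ := by
            ext; simp [hst, hst']
          rw [this, Fin.snoc_castSucc]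
        rw [h1, h2, h3]
      · apply Finset.sup'_le
        intro ub hub
        have hlast : ub (Fin.last (t+1)) = v := (Finset.mem_filter.mp hub).2
        set u' := ub (Fin.castSucc (Fin.last t)) with hu'
        have h1 : extPath ub (t+1) = v := by
          show ub ⟨min (t+1) (t+1), _⟩ = v
          have : (⟨min (t+1) (t+1), Nat.lt_succ_of_le (min_le_right _ _)⟩ : Fin (t+2)) =
              Fin.last (t+1) := by ext; simp
          rw [this, hlast]
        have h2 : extPath ub t = u' := by
          show ub ⟨min t (t+1), _⟩ = u'
          congr 1
          ext; simp [Nat.min_eq_left (Nat.le_succ t)]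
        have key : pweight π P Φ y t (extPath ub) ≤ r t u' := by
          rw [ih htT u']
          have h3 : pweight π P Φ y t (extPath ub) =
              pweight π P Φ y t (extPath (Fin.init ub)) := by
            refine pweight_congr π P Φ y t fun s hs => ?_
            show ub ⟨min s (t+1), _⟩ = Fin.init ub ⟨min s t, _⟩
            rw [Fin.init]
            congr 1
            ext
            simp [Nat.min_eq_left (le_trans hs (Nat.le_succ t)), Nat.min_eq_left hs]
          rw [h3]
          have hmem : Fin.init ub ∈ Finset.univ.filter
              (fun pb : Fin (t + 1) → Fin k => pb (Fin.last t) = u') := by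
            refine Finset.mem_filter.mpr ⟨Finset.mem_univ _, ?_⟩
            rw [Fin.init]
          exact Finset.le_sup' (fun pb => pweight π P Φ y t (extPath pb)) hmem
        rw [pweight_succ, h1, h2]
        refine mul_le_mul_of_nonneg_left ?_ (hΦ (t+1) hT _ _)
        refine le_trans (mul_le_mul_of_nonneg_right key (hP (t+1) (Nat.le_add_left 1 t) hT _ _)) ?_
        exact Finset.le_sup' (fun u => r t u * P (t+1) u v) (Finset.mem_univ u')
  refine ⟨main, le_antisymm ?_ ?_⟩
  · apply Finset.sup'_le
    intro v _
    rw [main T le_rfl v]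
    apply Finset.sup'_le
    intro ub hub
    exact Finset.le_sup' (fun ub : Fin (T+1) → Fin k => pweight π P Φ y T (extPath ub))
      (Finset.mem_univ ub)
  · apply Finset.sup'_le
    intro ub _
    refine le_trans ?_ (Finset.le_sup' (fun v => r T v) (Finset.mem_univ (ub (Fin.last T))))
    rw [main T le_rfl (ub (Fin.last T))]
    have hmem : ub ∈ Finset.univ.filter
        (fun pb : Fin (T + 1) → Fin k => pb (Fin.last T) = ub (Fin.last T)) := by simp
    exact Finset.le_sup' (fun pb => pweight π P Φ y T (extPath pb)) hmem
end
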